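/- Let A = {0,1}, let k be odd with k ≥ 1, and let n ≥ k+1. Both of the sequences γ^{n,k} and ρ^{n,k} are σ_k-Gray cycles over {0,1}^n. -/

import Mathlib

/-- Hamming distance between two words (lists) of the same length:
the number of positions in which they differ. -/
def hammingL {α : Type*} [DecidableEq α] (w w' : List α) : ℕ :=
  ((w.zip w').filter fun q => decide (q.1 ≠ q.2)).length

/-- `w` (restricted to indices `< N`) is a `σ_k`-Gray cycle over `X`:
its terms are pairwise distinct and enumerate `X` (a bijection from `[0, N-1]` onto `X`),
two consecutive terms have the same length and Hamming distance exactly `k`, and so do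
the first and the last term. -/
def IsGrayCycleOn {α : Type*} [DecidableEq α] (k N : ℕ) (w : ℕ → List α)
    (X : Set (List α)) : Prop :=
  Set.BijOn w (Set.Iio N) X ∧
  (∀ i, 1 ≤ i → i < N →
    (w (i - 1)).length = (w i).length ∧ hammingL (w (i - 1)) (w i) = k) ∧
  (0 < N → (w (N - 1)).length = (w 0).length ∧ hammingL (w (N - 1)) (w 0) = k)

/-- The bit complement `θ : 0 ↔ 1` on the binary alphabet `{0,1}`. -/
def cpl (x : Fin 2) : Fin 2 := x + 1

/-- The bit complement extended letterwise to binary words. -/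
def cplW (w : List (Fin 2)) : List (Fin 2) := w.map cpl

/-- The reflected binary Gray code `g^{m,1}` over words of length `m`:
`g^{0,1} = (ε)` and `g^{m+1,1} = (0·g^{m,1}, 1·(g^{m,1})^R)`. -/
def binGray : ℕ → List (List (Fin 2))
  | 0 => [[]]
  | m + 1 =>
      (binGray m).map (fun w => 0 :: w) ++ (binGray m).reverse.map (fun w => 1 :: w)

/-- The sequence `γ^{n0,1}`: `γ^{n0,1}_{[0]} = g^{n0,1}_{[0]}` and
`γ^{n0,1}_{[i]} = g^{n0,1}_{[2^{n0} - i]}` for `1 ≤ i ≤ 2^{n0} - 1`. -/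
def gamma1 (n0 i : ℕ) : List (Fin 2) :=
  if i = 0 then (binGray n0).getD 0 [] else (binGray n0).getD (2 ^ n0 - i) []

/-- The sequence `ρ^{n0,1}`: `ρ^{n0,1}_{[0]} = g^{n0,1}_{[2^{n0}-1]}` and
`ρ^{n0,1}_{[i]} = g^{n0,1}_{[i-1]}` for `1 ≤ i ≤ 2^{n0} - 1`. -/
def rho1 (n0 i : ℕ) : List (Fin 2) :=
  if i = 0 then (binGray n0).getD (2 ^ n0 - 1) [] else (binGray n0).getD (i - 1) []

/-- `grSeq n0 true t i` (resp. `grSeq n0 false t i`) is the term of index `i` of the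
sequence `γ^{n0+2t, 2t+1}` (resp. `ρ^{n0+2t, 2t+1}`), built inductively: the base cases
are `γ^{n0,1}` and `ρ^{n0,1}`, and, writing `i = q·2^m + r` with `m = n0 + 2t` and
`r < 2^m`, `γ^{m+2, (2t+1)+2}_{[i]}` is `θ^r(00)·γ^{m,2t+1}_{[r]}`, `θ^r(01)·ρ^{m,2t+1}_{[r]}`,
`θ^r(11)·γ^{m,2t+1}_{[r]}`, `θ^r(10)·ρ^{m,2t+1}_{[r]}` according to `q = 0, 1, 2, 3`, and
`ρ^{m+2, (2t+1)+2}_{[i]}` is `θ^r(10)·γ^{m,2t+1}_{[r]}`, `θ^r(11)·ρ^{m,2t+1}_{[r]}`,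
`θ^r(01)·γ^{m,2t+1}_{[r]}`, `θ^r(00)·ρ^{m,2t+1}_{[r]}` according to `q = 0, 1, 2, 3`. -/
def grSeq (n0 : ℕ) : Bool → ℕ → ℕ → List (Fin 2)
  | b, 0, i => if b then gamma1 n0 i else rho1 n0 i
  | b, t + 1, i =>
      cplW^[i % 2 ^ (n0 + 2 * t)]
        (if b then
          (if i / 2 ^ (n0 + 2 * t) = 0 then [0, 0]
           else if i / 2 ^ (n0 + 2 * t) = 1 then [0, 1]
           else if i / 2 ^ (n0 + 2 * t) = 2 then [1, 1] else [1, 0])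
         else
          (if i / 2 ^ (n0 + 2 * t) = 0 then [1, 0]
           else if i / 2 ^ (n0 + 2 * t) = 1 then [1, 1]
           else if i / 2 ^ (n0 + 2 * t) = 2 then [0, 1] else [0, 0])) ++
        grSeq n0 (i / 2 ^ (n0 + 2 * t) % 2 == 0) t (i % 2 ^ (n0 + 2 * t))

/-- For odd `k` and `n ≥ k + 1`, `gammaNK n k i` is the term `γ^{n,k}_{[i]}`
(here `n0 = n - k + 1` and `k = 2·(k/2) + 1`). -/
def gammaNK (n k i : ℕ) : List (Fin 2) := grSeq (n + 1 - k) true (k / 2) i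

/-- For odd `k` and `n ≥ k + 1`, `rhoNK n k i` is the term `ρ^{n,k}_{[i]}`. -/
def rhoNK (n k i : ℕ) : List (Fin 2) := grSeq (n + 1 - k) false (k / 2) i

section Basic
variable {α : Type*} [DecidableEq α]

lemma hammingL_nil_left (w : List α) : hammingL [] w = 0 := by
  simp [hammingL]

lemma hammingL_nil_right (w : List α) : hammingL w [] = 0 := by
  cases w <;> simp [hammingL]

lemma hammingL_cons (a b : α) (w w' : List α) :
    hammingL (a :: w) (b :: w') = (if a = b then 0 else 1) + hammingL w w' := by
  simp only [hammingL, List.zip_cons_cons, List.filter_cons]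
  by_cases h : a = b
  · simp [h]
  · simp [h]; omega

lemma hammingL_comm (w w' : List α) : hammingL w w' = hammingL w' w := by
  induction w generalizing w' with
  | nil => simp [hammingL_nil_left, hammingL_nil_right]
  | cons a w ih =>
    cases w' with
    | nil => simp [hammingL_nil_left, hammingL_nil_right]
    | cons b w' =>
      rw [hammingL_cons, hammingL_cons, ih]
      congr 1
      simp [eq_comm]

lemma hammingL_self (w : List α) : hammingL w w = 0 := by
  induction w with
  | nil => simp [hammingL_nil_left]
  | cons a w ih => rw [hammingL_cons]; simp [ih]

lemma hammingL_append {w w' : List α} (u u' : List α) (h : w.length = w'.length) :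
    hammingL (w ++ u) (w' ++ u') = hammingL w w' + hammingL u u' := by
  induction w generalizing w' with
  | nil =>
    cases w' with
    | nil => simp [hammingL_nil_left]
    | cons b w' => simp at h
  | cons a w ih =>
    cases w' with
    | nil => simp at h
    | cons b w' =>
      simp only [List.cons_append, hammingL_cons]
      rw [ih (by simpa using h)]
      omega

end Basic

lemma cpl_cpl (a : Fin 2) : cpl (cpl a) = a := by fin_cases a <;> rfl

lemma cpl_ne (a : Fin 2) : a ≠ cpl a := by fin_cases a <;> decide

lemma cplW_cplW (w : List (Fin 2)) : cplW (cplW w) = w := by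
  simp only [cplW, List.map_map]
  have : cpl ∘ cpl = id := funext cpl_cpl
  simp [this]

lemma cplW_length (w : List (Fin 2)) : (cplW w).length = w.length := by
  simp [cplW]

lemma hammingL_cplW_self (w : List (Fin 2)) : hammingL w (cplW w) = w.length := by
  induction w with
  | nil => simp [hammingL_nil_left]
  | cons a w ih =>
    show hammingL (a :: w) (cpl a :: cplW w) = _
    rw [hammingL_cons, if_neg (cpl_ne a), ih]
    simp [Nat.add_comm]

lemma hammingL_cplW_cplW (w w' : List (Fin 2)) :
    hammingL (cplW w) (cplW w') = hammingL w w' := by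
  induction w generalizing w' with
  | nil => simp [cplW, hammingL_nil_left]
  | cons a w ih =>
    cases w' with
    | nil => simp [cplW, hammingL_nil_right]
    | cons b w' =>
      show hammingL (cpl a :: cplW w) (cpl b :: cplW w') = _
      rw [hammingL_cons, hammingL_cons, ih]
      congr 1
      have : cpl a = cpl b ↔ a = b := by
        constructor
        · intro h; have := congrArg cpl h; rwa [cpl_cpl, cpl_cpl] at this
        · intro h; rw [h]
      simp [this]

lemma cplW_iterate (r : ℕ) (w : List (Fin 2)) :
    cplW^[r] w = if r % 2 = 0 then w else cplW w := by
  induction r with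
  | zero => simp
  | succ r ih =>
    rw [Function.iterate_succ_apply', ih]
    rcases Nat.mod_two_eq_zero_or_one r with h | h
    · rw [if_pos h, if_neg (by omega)]
    · rw [if_neg (by omega), if_pos (by omega), cplW_cplW]

lemma binGray_length (m : ℕ) : (binGray m).length = 2 ^ m := by
  induction m with
  | zero => rfl
  | succ m ih => simp [binGray, ih]; ring

lemma binGray_mem_length {m : ℕ} {w : List (Fin 2)} (h : w ∈ binGray m) : w.length = m := by
  induction m generalizing w with
  | zero => simp [binGray] at h; simp [h]
  | succ m ih =>
    simp only [binGray, List.mem_append, List.mem_map, List.mem_reverse] at h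
    rcases h with ⟨u, hu, rfl⟩ | ⟨u, hu, rfl⟩ <;> simp [ih hu]

/-- abbreviation for terms of the Gray code -/
def G (m i : ℕ) : List (Fin 2) := (binGray m).getD i []

lemma G_eq_getElem (m : ℕ) {i : ℕ} (h : i < 2 ^ m) :
    G m i = (binGray m)[i]'(by rw [binGray_length]; exact h) := by
  rw [G, List.getD_eq_getElem]

lemma G_length {m i : ℕ} (h : i < 2 ^ m) : (G m i).length = m := by
  rw [G_eq_getElem m h]
  exact binGray_mem_length (List.getElem_mem _)

lemma G_succ_left (m : ℕ) {i : ℕ} (h : i < 2 ^ m) :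
    G (m + 1) i = 0 :: G m i := by
  have h1 : i < 2 ^ (m+1) := by have := Nat.pow_lt_pow_succ (a := 2) (by norm_num) (n := m); omega
  rw [G_eq_getElem _ h1, G_eq_getElem _ h]
  simp only [binGray]
  rw [List.getElem_append_left (by simp [binGray_length m]; exact h)]
  simp

lemma G_succ_right (m : ℕ) {j : ℕ} (h : j < 2 ^ m) :
    G (m + 1) (2 ^ m + j) = 1 :: G m (2 ^ m - 1 - j) := by
  have h1 : 2 ^ m + j < 2 ^ (m+1) := by rw [pow_succ]; omega
  have h2 : 2 ^ m - 1 - j < 2 ^ m := by have := Nat.pow_pos (n := m) (show 0 < 2 by norm_num); omega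
  rw [G_eq_getElem _ h1, G_eq_getElem _ h2]
  simp only [binGray]
  rw [List.getElem_append_right (by simp [binGray_length m])]
  simp only [List.length_map, binGray_length m, List.getElem_map, List.getElem_reverse, binGray_length]
  congr 2
  omega

lemma G_zero (m : ℕ) : G m 0 = List.replicate m 0 := by
  induction m with
  | zero => rfl
  | succ m ih =>
    rw [G_succ_left m (Nat.pow_pos (n := m) (by norm_num)), ih]
    rfl

lemma G_last (m : ℕ) : G (m + 1) (2 ^ (m+1) - 1) = 1 :: List.replicate m 0 := by
  have h : 2 ^ (m+1) - 1 = 2 ^ m + (2 ^ m - 1) := by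
    have := Nat.pow_pos (n := m) (show 0 < 2 by norm_num); rw [pow_succ]; omega
  rw [h, G_succ_right m (by have := Nat.pow_pos (n := m) (show 0 < 2 by norm_num); omega)]
  have : 2 ^ m - 1 - (2 ^ m - 1) = 0 := by omega
  rw [this, G_zero]

lemma G_one (m : ℕ) : G (m + 1) 1 = List.replicate m 0 ++ [1] := by
  induction m with
  | zero => rfl
  | succ m ih =>
    rw [G_succ_left (m+1) (by have := Nat.one_lt_two_pow_iff (n := m+1); omega), ih]
    rfl

lemma G_last2 (m : ℕ) : G (m + 2) (2 ^ (m+2) - 2) = 1 :: (List.replicate m 0 ++ [1]) := by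
  have hp : 0 < 2 ^ (m+1) := Nat.pow_pos (by norm_num)
  have h : 2 ^ (m+2) - 2 = 2 ^ (m+1) + (2 ^ (m+1) - 2) := by rw [pow_succ]; omega
  rw [h, G_succ_right (m+1) (by omega)]
  have h2 : 2 ^ (m+1) - 1 - (2 ^ (m+1) - 2) = 1 := by
    have := Nat.one_lt_two_pow_iff (n := m+1); omega
  rw [h2, G_one]

lemma G_adj (m : ℕ) : ∀ i, 1 ≤ i → i < 2 ^ m → hammingL (G m (i-1)) (G m i) = 1 := by
  induction m with
  | zero => intro i h1 h2; omega
  | succ m ih =>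
    intro i h1 h2
    have hp : 0 < 2 ^ m := Nat.pow_pos (by norm_num)
    rcases lt_trichotomy i (2 ^ m) with h | h | h
    · rw [G_succ_left m (by omega), G_succ_left m h, hammingL_cons]
      simp [ih i h1 h]
    · have hil : i - 1 = 2 ^ m - 1 := by omega
      rw [hil, h, G_succ_left m (by omega)]
      have : (2:ℕ) ^ m = 2 ^ m + 0 := by omega
      rw [this, G_succ_right m (by omega)]
      rw [hammingL_cons, if_neg (by decide)]
      simp [hammingL_self]
    · -- i = 2^m + j, j ≥ 1
      have hj : i - 2 ^ m ≥ 1 := by omega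
      have hje : i = 2 ^ m + (i - 2 ^ m) := by omega
      have hje2 : i - 1 = 2 ^ m + (i - 2 ^ m - 1) := by omega
      rw [hje2, G_succ_right m (by rw [pow_succ] at h2; omega)]
      conv_lhs => rw [hje]
      rw [G_succ_right m (by rw [pow_succ] at h2; omega)]
      rw [hammingL_cons, if_pos rfl]
      set a := 2 ^ m - 1 - (i - 2 ^ m)
      have ha1 : 1 ≤ a + 1 := by omega
      have ha2 : a + 1 < 2 ^ m := by rw [pow_succ] at h2; omega
      have hrw : 2 ^ m - 1 - (2 ^ m + (i - 2 ^ m) - 2 ^ m - 1) = a + 1 := by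
        rw [pow_succ] at h2; omega
      rw [hrw, hammingL_comm]
      have := ih (a+1) ha1 ha2
      simpa using this

lemma G_wrap (m : ℕ) (hm : 1 ≤ m) : hammingL (G m (2 ^ m - 1)) (G m 0) = 1 := by
  obtain ⟨m, rfl⟩ : ∃ m', m = m' + 1 := ⟨m - 1, by omega⟩
  rw [G_last, G_zero]
  show hammingL (1 :: List.replicate m 0) (0 :: List.replicate m 0) = 1
  rw [hammingL_cons, if_neg (by decide), hammingL_self]

lemma binGray_nodup (m : ℕ) : (binGray m).Nodup := by
  induction m with
  | zero => simp [binGray]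
  | succ m ih =>
    simp only [binGray]
    apply List.Nodup.append
    · exact ih.map (fun a b h => by injection h)
    · exact (List.nodup_reverse.mpr ih).map (fun a b h => by injection h)
    · intro x hx hy
      simp only [List.mem_map, List.mem_reverse] at hx hy
      obtain ⟨u, _, rfl⟩ := hx
      obtain ⟨v, _, hv⟩ := hy
      injection hv.symm with h _
      exact absurd h (by decide)

lemma G_inj {m i j : ℕ} (hi : i < 2 ^ m) (hj : j < 2 ^ m) (h : G m i = G m j) : i = j := by
  rw [G_eq_getElem m hi, G_eq_getElem m hj] at h
  exact (List.Nodup.getElem_inj_iff (binGray_nodup m)).mp h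

/-- the two-letter prefixes used in the inductive construction -/
def pre (b : Bool) (q : ℕ) : List (Fin 2) :=
  if b then
    (if q = 0 then [0, 0] else if q = 1 then [0, 1] else if q = 2 then [1, 1] else [1, 0])
  else
    (if q = 0 then [1, 0] else if q = 1 then [1, 1] else if q = 2 then [0, 1] else [0, 0])

lemma pre_length (b : Bool) (q : ℕ) : (pre b q).length = 2 := by
  cases b <;> simp only [pre] <;> split_ifs <;> rfl

lemma iter_pre_length (b : Bool) (q r : ℕ) : (cplW^[r] (pre b q)).length = 2 := by
  rw [cplW_iterate]
  split_ifs
  · exact pre_length b q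
  · rw [cplW_length]; exact pre_length b q

lemma grSeq_zero (n0 : ℕ) (b : Bool) (i : ℕ) :
    grSeq n0 b 0 i = if b then gamma1 n0 i else rho1 n0 i := rfl

lemma grSeq_succ_eq (n0 : ℕ) (b : Bool) (t q r : ℕ) (hr : r < 2 ^ (n0 + 2 * t)) :
    grSeq n0 b (t + 1) (q * 2 ^ (n0 + 2 * t) + r)
      = cplW^[r] (pre b q) ++ grSeq n0 (q % 2 == 0) t r := by
  have hdiv : (q * 2 ^ (n0 + 2 * t) + r) / 2 ^ (n0 + 2 * t) = q := by
    rw [mul_comm, Nat.mul_add_div (Nat.pow_pos (by norm_num)),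
      Nat.div_eq_of_lt hr, Nat.add_zero]
  have hmod : (q * 2 ^ (n0 + 2 * t) + r) % 2 ^ (n0 + 2 * t) = r := by
    have h2 : q * 2 ^ (n0 + 2 * t) + r = r + 2 ^ (n0 + 2 * t) * q := by ring
    rw [h2, Nat.add_mul_mod_self_left, Nat.mod_eq_of_lt hr]
  show cplW^[_] _ ++ _ = _
  rw [hdiv, hmod]
  cases b <;> rfl

lemma pre_mod_eq (b : Bool) {qi qj ri rj : ℕ} (hqi : qi < 4) (hqj : qj < 4)
    (h : cplW^[ri] (pre b qi) = cplW^[rj] (pre b qj)) : qi % 2 = qj % 2 := by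
  rw [cplW_iterate, cplW_iterate] at h
  rcases Nat.mod_two_eq_zero_or_one ri with hri | hri <;>
    rcases Nat.mod_two_eq_zero_or_one rj with hrj | hrj <;>
    simp only [hri, hrj, if_pos, if_neg, one_ne_zero, reduceIte] at h <;>
    (cases b <;> interval_cases qi <;> interval_cases qj <;> revert h <;> decide)

lemma pre_inj (b : Bool) {q q' : ℕ} (hq : q < 4) (hq' : q' < 4) (h : pre b q = pre b q') :
    q = q' := by
  cases b <;> interval_cases q <;> interval_cases q' <;> revert h <;> decide

lemma hamm_repl_aux (a : ℕ) :
    hammingL (List.replicate a (0:Fin 2) ++ [1]) (List.replicate (a+1) (0:Fin 2)) = 1 := by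
  induction a with
  | zero => decide
  | succ a ih =>
    show hammingL (0 :: (List.replicate a (0:Fin 2) ++ [1]))
      (0 :: List.replicate (a+1) (0:Fin 2)) = 1
    rw [hammingL_cons, if_pos rfl, ih]

/-- The inductive invariant: both sequences are Gray cycles of the right parameters,
and the junction Hamming distances hold. -/
def GoodPair (n0 t : ℕ) : Prop :=
  (∀ b : Bool, ∀ i < 2 ^ (n0 + 2 * t), (grSeq n0 b t i).length = n0 + 2 * t) ∧
  (∀ b : Bool, ∀ i < 2 ^ (n0 + 2 * t), ∀ j < 2 ^ (n0 + 2 * t),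
    grSeq n0 b t i = grSeq n0 b t j → i = j) ∧
  (∀ b : Bool, ∀ i, 1 ≤ i → i < 2 ^ (n0 + 2 * t) →
    hammingL (grSeq n0 b t (i - 1)) (grSeq n0 b t i) = 2 * t + 1) ∧
  (∀ b : Bool, hammingL (grSeq n0 b t (2 ^ (n0 + 2 * t) - 1)) (grSeq n0 b t 0) = 2 * t + 1) ∧
  hammingL (grSeq n0 true t (2 ^ (n0 + 2 * t) - 1)) (grSeq n0 false t 0) = 2 * t + 2 ∧
  hammingL (grSeq n0 true t 0) (grSeq n0 false t (2 ^ (n0 + 2 * t) - 1)) = 2 * t + 2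

lemma grSeq_zero_true (n0 i : ℕ) :
    grSeq n0 true 0 i = if i = 0 then G n0 0 else G n0 (2 ^ n0 - i) := rfl

lemma grSeq_zero_false (n0 i : ℕ) :
    grSeq n0 false 0 i = if i = 0 then G n0 (2 ^ n0 - 1) else G n0 (i - 1) := rfl

lemma goodPair_zero (n0 : ℕ) (hn0 : 2 ≤ n0) : GoodPair n0 0 := by
  have hM4 : 4 ≤ 2 ^ n0 := by
    calc (4:ℕ) = 2 ^ 2 := rfl
    _ ≤ 2 ^ n0 := Nat.pow_le_pow_right (by norm_num) hn0
  have e0 : n0 + 2 * 0 = n0 := by omega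
  set M := 2 ^ n0 with hMdef
  refine ⟨?_, ?_, ?_, ?_, ?_, ?_⟩
  · -- lengths
    rw [e0]
    intro b i hi
    cases b <;> [rw [grSeq_zero_false]; rw [grSeq_zero_true]] <;>
      split_ifs <;> exact G_length (by omega)
  · -- injectivity
    rw [e0]
    intro b i hi j hj h
    cases b
    · rw [grSeq_zero_false, grSeq_zero_false] at h
      split_ifs at h with h1 h2 h2
      · omega
      · have := G_inj (i := 2 ^ n0 - 1) (by omega) (by omega) h; omega
      · have := G_inj (i := i - 1) (by omega) (by omega) h; omega
      · have := G_inj (i := i - 1) (by omega) (by omega) h; omega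
    · rw [grSeq_zero_true, grSeq_zero_true] at h
      split_ifs at h with h1 h2 h2
      · omega
      · have := G_inj (i := 0) (by omega) (by omega) h; omega
      · have := G_inj (i := 2 ^ n0 - i) (by omega) (by omega) h; omega
      · have := G_inj (i := 2 ^ n0 - i) (by omega) (by omega) h; omega
  · -- adjacency
    rw [e0]
    intro b i h1 hi
    cases b
    · rw [grSeq_zero_false, grSeq_zero_false]
      rcases Nat.eq_or_lt_of_le h1 with h | h
    -- i = 1
      · rw [if_pos (by omega), if_neg (by omega), ← h]
        simpa using G_wrap n0 (by omega)
      · rw [if_neg (by omega), if_neg (by omega)]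
        have := G_adj n0 (i-1) (by omega) (by omega)
        have e : i - 1 - 1 = i - 2 := by omega
        rw [e] at this
        simpa [e] using this
    · rw [grSeq_zero_true, grSeq_zero_true]
      rcases Nat.eq_or_lt_of_le h1 with h | h
      · rw [if_pos (by omega), if_neg (by omega), ← h]
        rw [hammingL_comm]
        simpa using G_wrap n0 (by omega)
      · rw [if_neg (by omega), if_neg (by omega)]
        rw [hammingL_comm]
        have := G_adj n0 (2 ^ n0 - i + 1) (by omega) (by omega)
        have e1 : 2 ^ n0 - i + 1 - 1 = 2 ^ n0 - i := by omega
        have e2 : 2 ^ n0 - i + 1 = 2 ^ n0 - (i - 1) := by omega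
        rw [e1, e2] at this
        simpa using this
  · -- wraparound
    rw [e0]
    intro b
    cases b
    · rw [grSeq_zero_false, grSeq_zero_false, if_neg (by omega), if_pos rfl]
      have := G_adj n0 (2 ^ n0 - 1) (by omega) (by omega)
      have e : 2 ^ n0 - 1 - 1 = 2 ^ n0 - 2 := by omega
      rw [e] at this
      simpa [e] using this
    · rw [grSeq_zero_true, grSeq_zero_true, if_neg (by omega), if_pos rfl]
      have e : 2 ^ n0 - (2 ^ n0 - 1) = 1 := by omega
      rw [e, hammingL_comm]
      simpa using G_adj n0 1 (by omega) (by omega)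
  · -- junction 1
    rw [e0, grSeq_zero_true, grSeq_zero_false, if_neg (by omega), if_pos rfl]
    have e : 2 ^ n0 - (2 ^ n0 - 1) = 1 := by omega
    rw [e]
    obtain ⟨p, rfl⟩ : ∃ p, n0 = p + 2 := ⟨n0 - 2, by omega⟩
    rw [show p + 2 = (p + 1) + 1 from rfl, G_one, G_last]
    rw [show List.replicate (p+1) (0:Fin 2) ++ [1] = 0 :: (List.replicate p 0 ++ [1]) from rfl]
    rw [hammingL_cons, if_neg (by decide), hamm_repl_aux]
  · -- junction 2
    rw [e0, grSeq_zero_true, grSeq_zero_false, if_pos rfl, if_neg (by omega)]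
    obtain ⟨p, rfl⟩ : ∃ p, n0 = p + 2 := ⟨n0 - 2, by omega⟩
    rw [show 2 ^ (p+2) - 1 - 1 = 2 ^ (p+2) - 2 by omega, G_zero, G_last2]
    rw [show List.replicate (p+2) (0:Fin 2) = 0 :: List.replicate (p+1) 0 from rfl]
    rw [hammingL_cons, if_neg (by decide), hammingL_comm, hamm_repl_aux]

lemma iter_cplW_inj {x y : List (Fin 2)} (r : ℕ) (h : cplW^[r] x = cplW^[r] y) : x = y := by
  rw [cplW_iterate, cplW_iterate] at h
  split_ifs at h
  · exact h
  · have := congrArg cplW h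
    rwa [cplW_cplW, cplW_cplW] at this

lemma goodPair_succ (n0 t : ℕ) (hn0 : 2 ≤ n0) (IH : GoodPair n0 t) : GoodPair n0 (t + 1) := by
  obtain ⟨len, inj, adj, wrap, j1, j2⟩ := IH
  set M := 2 ^ (n0 + 2 * t) with hMdef
  have hM4 : 4 ≤ M := by
    rw [hMdef]
    calc (4:ℕ) = 2 ^ 2 := rfl
    _ ≤ 2 ^ (n0 + 2 * t) := Nat.pow_le_pow_right (by norm_num) (by omega)
  have hMeven : M % 2 = 0 := by
    rw [hMdef]
    have : (2:ℕ) ∣ 2 ^ (n0 + 2 * t) := dvd_pow_self 2 (by omega)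
    omega
  have hpow : 2 ^ (n0 + 2 * (t + 1)) = 4 * M := by
    rw [hMdef, show n0 + 2 * (t + 1) = (n0 + 2 * t) + 1 + 1 from by omega, pow_succ, pow_succ]
    ring
  have hModd : (M - 1) % 2 = 1 := by omega
  have decomp : ∀ i < 4 * M, ∃ q r, q < 4 ∧ r < M ∧ i = q * M + r := by
    intro i hi
    refine ⟨i / M, i % M, ?_, Nat.mod_lt _ (by omega), ?_⟩
    · rw [Nat.div_lt_iff_lt_mul (by omega)]; omega
    · rw [mul_comm]; exact (Nat.div_add_mod i M).symm
  refine ⟨?_, ?_, ?_, ?_, ?_, ?_⟩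
  · -- lengths
    intro b i hi
    rw [hpow] at hi
    obtain ⟨q, r, hq, hr, rfl⟩ := decomp i hi
    rw [grSeq_succ_eq n0 b t q r hr, List.length_append, iter_pre_length,
      len _ r hr]
    omega
  · -- injectivity
    intro b i hi j hj h
    rw [hpow] at hi hj
    obtain ⟨qi, ri, hqi, hri, rfl⟩ := decomp i hi
    obtain ⟨qj, rj, hqj, hrj, rfl⟩ := decomp j hj
    rw [grSeq_succ_eq n0 b t qi ri hri, grSeq_succ_eq n0 b t qj rj hrj] at h
    obtain ⟨h1, h2⟩ := List.append_inj h (by rw [iter_pre_length, iter_pre_length])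
    have hmod : qi % 2 = qj % 2 := pre_mod_eq b hqi hqj h1
    have hbool : (qi % 2 == 0) = (qj % 2 == 0) := by rw [hmod]
    rw [hbool] at h2
    have hrr : ri = rj := inj _ ri hri rj hrj h2
    subst hrr
    have hpre : pre b qi = pre b qj := iter_cplW_inj ri h1
    have : qi = qj := pre_inj b hqi hqj hpre
    subst this
    rfl
  · -- adjacency
    intro b i h1 hi
    rw [hpow] at hi
    obtain ⟨q, r, hq, hr, rfl⟩ := decomp i hi
    rcases Nat.eq_zero_or_pos r with hr0 | hr1
    · -- block junction
      subst hr0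
      have hq1 : 1 ≤ q := by
        rcases Nat.eq_zero_or_pos q with rfl | hpos
        · simp at h1
        · exact hpos
      interval_cases q
      · -- q = 1
        rw [show 1 * M + 0 - 1 = 0 * M + (M - 1) from by omega,
          show 1 * M + 0 = 1 * M + 0 from rfl,
          grSeq_succ_eq n0 b t 0 (M - 1) (by omega),
          grSeq_succ_eq n0 b t 1 0 (by omega),
          hammingL_append _ _ (by rw [iter_pre_length, iter_pre_length])]
        have hp : hammingL (cplW^[M-1] (pre b 0)) (cplW^[0] (pre b 1)) = 1 := by
          rw [cplW_iterate, if_neg (by omega), Function.iterate_zero_apply]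
          cases b <;> decide
        rw [hp]
        norm_num
        rw [show ((1:ℕ) == 0) = false from rfl, j1]
        omega
      · -- q = 2
        rw [show 2 * M + 0 - 1 = 1 * M + (M - 1) from by omega,
          grSeq_succ_eq n0 b t 1 (M - 1) (by omega),
          grSeq_succ_eq n0 b t 2 0 (by omega),
          hammingL_append _ _ (by rw [iter_pre_length, iter_pre_length])]
        have hp : hammingL (cplW^[M-1] (pre b 1)) (cplW^[0] (pre b 2)) = 1 := by
          rw [cplW_iterate, if_neg (by omega), Function.iterate_zero_apply]
          cases b <;> decide
        rw [hp]
        norm_num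
        rw [show ((1:ℕ) == 0) = false from rfl, hammingL_comm, j2]
        omega
      · -- q = 3
        rw [show 3 * M + 0 - 1 = 2 * M + (M - 1) from by omega,
          grSeq_succ_eq n0 b t 2 (M - 1) (by omega),
          grSeq_succ_eq n0 b t 3 0 (by omega),
          hammingL_append _ _ (by rw [iter_pre_length, iter_pre_length])]
        have hp : hammingL (cplW^[M-1] (pre b 2)) (cplW^[0] (pre b 3)) = 1 := by
          rw [cplW_iterate, if_neg (by omega), Function.iterate_zero_apply]
          cases b <;> decide
        rw [hp]
        norm_num
        rw [show ((1:ℕ) == 0) = false from rfl, j1]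
        omega
    · -- inside a block
      obtain ⟨r', rfl⟩ : ∃ r', r = r' + 1 := ⟨r - 1, by omega⟩
      rw [show q * M + (r' + 1) - 1 = q * M + r' from by omega,
        grSeq_succ_eq n0 b t q r' (by omega),
        grSeq_succ_eq n0 b t q (r' + 1) hr,
        hammingL_append _ _ (by rw [iter_pre_length, iter_pre_length])]
      have hp : hammingL (cplW^[r'] (pre b q)) (cplW^[r' + 1] (pre b q)) = 2 := by
        rw [Function.iterate_succ_apply', hammingL_cplW_self, iter_pre_length]
      rw [hp]
      have ha := adj (q % 2 == 0) (r' + 1) (by omega) hr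
      rw [show r' + 1 - 1 = r' from by omega] at ha
      rw [ha]
      omega
  · -- wraparound
    intro b
    rw [hpow, show 4 * M - 1 = 3 * M + (M - 1) from by omega,
      show (0:ℕ) = 0 * M + 0 from by omega,
      grSeq_succ_eq n0 b t 3 (M - 1) (by omega),
      grSeq_succ_eq n0 b t 0 0 (by omega),
      hammingL_append _ _ (by rw [iter_pre_length, iter_pre_length])]
    have hp : hammingL (cplW^[M-1] (pre b 3)) (cplW^[0] (pre b 0)) = 1 := by
      rw [cplW_iterate, if_neg (by omega), Function.iterate_zero_apply]
      cases b <;> decide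
    rw [hp]
    norm_num
    rw [show ((1:ℕ) == 0) = false from rfl, hammingL_comm, j2]
    omega
  · -- junction 1
    rw [hpow, show 4 * M - 1 = 3 * M + (M - 1) from by omega,
      show (0:ℕ) = 0 * M + 0 from by omega,
      grSeq_succ_eq n0 true t 3 (M - 1) (by omega),
      grSeq_succ_eq n0 false t 0 0 (by omega),
      hammingL_append _ _ (by rw [iter_pre_length, iter_pre_length])]
    have hp : hammingL (cplW^[M-1] (pre true 3)) (cplW^[0] (pre false 0)) = 2 := by
      rw [cplW_iterate, if_neg (by omega), Function.iterate_zero_apply]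
      decide
    rw [hp]
    norm_num
    rw [show ((1:ℕ) == 0) = false from rfl, hammingL_comm, j2]
    omega
  · -- junction 2
    rw [hpow, show 4 * M - 1 = 3 * M + (M - 1) from by omega,
      show (0:ℕ) = 0 * M + 0 from by omega,
      grSeq_succ_eq n0 true t 0 0 (by omega),
      grSeq_succ_eq n0 false t 3 (M - 1) (by omega),
      hammingL_append _ _ (by rw [iter_pre_length, iter_pre_length])]
    have hp : hammingL (cplW^[0] (pre true 0)) (cplW^[M-1] (pre false 3)) = 2 := by
      rw [Function.iterate_zero_apply, cplW_iterate, if_neg (by omega)]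
      decide
    rw [hp]
    norm_num
    rw [show ((1:ℕ) == 0) = false from rfl, j2]
    omega

lemma goodPair (n0 t : ℕ) (hn0 : 2 ≤ n0) : GoodPair n0 t := by
  induction t with
  | zero => exact goodPair_zero n0 hn0
  | succ t ih => exact goodPair_succ n0 t hn0 ih

lemma setOf_length_card (n : ℕ) :
    Nat.card {w : List (Fin 2) | w.length = n} = 2 ^ n := by
  have e : {w : List (Fin 2) | w.length = n} ≃ List.Vector (Fin 2) n :=
    Equiv.subtypeEquivRight (fun w => Iff.rfl)
  rw [Nat.card_congr e, Nat.card_eq_fintype_card, card_vector]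
  rfl

lemma setOf_length_finite (n : ℕ) : {w : List (Fin 2) | w.length = n}.Finite := by
  have e : {w : List (Fin 2) | w.length = n} ≃ List.Vector (Fin 2) n :=
    Equiv.subtypeEquivRight (fun w => Iff.rfl)
  have : Finite ({w : List (Fin 2) | w.length = n} : Set (List (Fin 2))) :=
    Finite.of_equiv _ e.symm
  exact Set.toFinite _

lemma toCycle (n0 t n : ℕ) (hn0 : 2 ≤ n0) (hsum : n0 + 2 * t = n) (b : Bool) :
    IsGrayCycleOn (2 * t + 1) (2 ^ n) (grSeq n0 b t) {w : List (Fin 2) | w.length = n} := by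
  obtain ⟨len, inj, adj, wrap, -, -⟩ := goodPair n0 t hn0
  rw [hsum] at len inj adj wrap
  have hpos : 0 < 2 ^ n := Nat.pow_pos (by norm_num)
  have hmaps : Set.MapsTo (grSeq n0 b t) (Set.Iio (2 ^ n)) {w | w.length = n} :=
    fun i hi => len b i hi
  have hinj : Set.InjOn (grSeq n0 b t) (Set.Iio (2 ^ n)) :=
    fun i hi j hj h => inj b i hi j hj h
  refine ⟨⟨hmaps, hinj, ?_⟩, ?_, ?_⟩
  · -- SurjOn
    have himg : grSeq n0 b t '' Set.Iio (2 ^ n) ⊆ {w | w.length = n} :=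
      Set.mapsTo_iff_image_subset.mp hmaps
    have hicard : (grSeq n0 b t '' Set.Iio (2 ^ n)).ncard = 2 ^ n := by
      rw [Set.ncard_image_of_injOn hinj, Set.ncard_Iio_nat]
    have heq := Set.eq_of_subset_of_ncard_le himg
      (by rw [hicard, ← Nat.card_coe_set_eq, setOf_length_card])
      (setOf_length_finite n)
    exact heq.ge
  · intro i h1 hi
    exact ⟨by rw [len b (i - 1) (by omega), len b i hi], adj b i h1 hi⟩
  · intro _
    exact ⟨by rw [len b (2 ^ n - 1) (by omega), len b 0 (by omega)], wrap b⟩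

/-- For `k` odd with `k ≥ 1` and `n ≥ k + 1`, both `γ^{n,k}` and `ρ^{n,k}` are
`σ_k`-Gray cycles over `{0,1}^n`. -/
theorem statement7 (n k : ℕ) (hk1 : 1 ≤ k) (hk : Odd k) (hn : k + 1 ≤ n) :
    IsGrayCycleOn k (2 ^ n) (gammaNK n k) {w : List (Fin 2) | w.length = n} ∧
    IsGrayCycleOn k (2 ^ n) (rhoNK n k) {w : List (Fin 2) | w.length = n} := by
  obtain ⟨t, rfl⟩ := hk
  have hdiv : (2 * t + 1) / 2 = t := by omega
  have harg : n + 1 - (2 * t + 1) = n - 2 * t := by omega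
  have hsum : (n - 2 * t) + 2 * t = n := by omega
  have hn0 : 2 ≤ n - 2 * t := by omega
  constructor
  · have e : gammaNK n (2 * t + 1) = grSeq (n - 2 * t) true t := by
      unfold gammaNK; rw [hdiv, harg]
    rw [e]
    exact toCycle (n - 2 * t) t n hn0 hsum true
  · have e : rhoNK n (2 * t + 1) = grSeq (n - 2 * t) false t := by
      unfold rhoNK; rw [hdiv, harg]
    rw [e]
    exact toCycle (n - 2 * t) t n hn0 hsum false
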